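/- arXiv:2303.08242 — 5 statements merged into one kernel-verified Lean document; each statement's English description precedes it below -/
import Mathlib

section
/- Let L be a nonnegative real-valued random variable on a probability space, let q ∈ (0,1], and suppose r ≥ 0 satisfies P(L > r) = q. Then for every measurable function s : ℝ → [0,1] with E[s(L)] = q, one has E[s(L) · L] ≤ E[1_{L > r} · L]. -/
open MeasureTheory

/-- Neyman–Pearson-type optimality: among all randomized selection rules
`s : ℝ → [0,1]` with selection rate `E[s(L)] = q`, the hard-thresholding rule
`1_{L > r}` (with `P(L > r) = q`) maximizes the expected selected score `E[s(L)·L]`. -/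
theorem thresholding_maximizes {Ω : Type*} [MeasurableSpace Ω] (μ : Measure Ω)
    [IsProbabilityMeasure μ] (L : Ω → ℝ) (hLmeas : Measurable L)
    (hLnonneg : ∀ ω, 0 ≤ L ω) (hLint : Integrable L μ)
    (q : ℝ) (hq : q ∈ Set.Ioc (0 : ℝ) 1) (r : ℝ) (hr : 0 ≤ r)
    (hrq : μ {ω | r < L ω} = ENNReal.ofReal q)
    (s : ℝ → ℝ) (hs : Measurable s) (hs01 : ∀ x, s x ∈ Set.Icc (0 : ℝ) 1)
    (hsq : ∫ ω, s (L ω) ∂μ = q) :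
    ∫ ω, s (L ω) * L ω ∂μ ≤ ∫ ω, (if r < L ω then L ω else 0) ∂μ := by
  set A : Set Ω := {ω | r < L ω} with hA
  have hAmeas : MeasurableSet A := measurableSet_lt measurable_const hLmeas
  set f : Ω → ℝ := fun ω => if r < L ω then (1:ℝ) else 0 with hf
  have hfmeas : Measurable f := Measurable.ite hAmeas measurable_const measurable_const
  have hsLmeas : Measurable (fun ω => s (L ω)) := hs.comp hLmeas
  have hfL_int : Integrable (fun ω => f ω * L ω) μ := by
    refine hLint.mono ((hfmeas.mul hLmeas).aestronglyMeasurable) (Filter.Eventually.of_forall ?_)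
    intro ω
    simp only [hf, Real.norm_eq_abs, abs_mul]
    split <;> simp [abs_nonneg]
  have hsL_int : Integrable (fun ω => s (L ω) * L ω) μ := by
    refine hLint.mono ((hsLmeas.mul hLmeas).aestronglyMeasurable) (Filter.Eventually.of_forall ?_)
    intro ω
    rw [Real.norm_eq_abs, Real.norm_eq_abs, abs_mul]
    have h1 := (hs01 (L ω)).1
    have h2 := (hs01 (L ω)).2
    rw [abs_of_nonneg h1]
    nlinarith [abs_nonneg (L ω)]
  have hf_int : Integrable f μ := by
    refine (integrable_const (1:ℝ)).mono hfmeas.aestronglyMeasurable (Filter.Eventually.of_forall ?_)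
    intro ω; simp only [hf]; split <;> simp
  have hsL1_int : Integrable (fun ω => s (L ω)) μ := by
    refine (integrable_const (1:ℝ)).mono hsLmeas.aestronglyMeasurable (Filter.Eventually.of_forall ?_)
    intro ω
    have h1 := (hs01 (L ω)).1
    have h2 := (hs01 (L ω)).2
    simp only [Real.norm_eq_abs, abs_le, norm_one]
    constructor <;> linarith
  have hfq : ∫ ω, f ω ∂μ = q := by
    have hfe : f = A.indicator (1 : Ω → ℝ) := by
      ext ω; simp [hf, Set.indicator_apply, hA, Set.mem_setOf_eq]
    rw [hfe, integral_indicator_one hAmeas, measureReal_def, hrq, ENNReal.toReal_ofReal hq.1.le]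
  -- key pointwise inequality
  have hkey : 0 ≤ ∫ ω, (f ω - s (L ω)) * (L ω - r) ∂μ := by
    refine integral_nonneg fun ω => ?_
    have h1 := (hs01 (L ω)).1
    have h2 := (hs01 (L ω)).2
    simp only [hf, Pi.zero_apply]
    split_ifs with h
    · nlinarith
    · push_neg at h; nlinarith
  have hexp : ∫ ω, (f ω - s (L ω)) * (L ω - r) ∂μ
      = ∫ ω, f ω * L ω ∂μ - r * q - (∫ ω, s (L ω) * L ω ∂μ) + r * q := by
    have : (fun ω => (f ω - s (L ω)) * (L ω - r))
        = fun ω => (f ω * L ω - r * f ω) - (s (L ω) * L ω - r * s (L ω)) := by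
      ext ω; ring
    have i1 : Integrable (fun ω => f ω * L ω - r * f ω) μ := hfL_int.sub (hf_int.const_mul r)
    have i2 : Integrable (fun ω => s (L ω) * L ω - r * s (L ω)) μ := hsL_int.sub (hsL1_int.const_mul r)
    rw [this, integral_sub i1 i2,
      integral_sub hfL_int (hf_int.const_mul r), integral_sub hsL_int (hsL1_int.const_mul r),
      MeasureTheory.integral_const_mul, MeasureTheory.integral_const_mul, hfq, hsq]
    ring
  have hle : ∫ ω, s (L ω) * L ω ∂μ ≤ ∫ ω, f ω * L ω ∂μ := by
    rw [hexp] at hkey; linarith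
  have : ∫ ω, f ω * L ω ∂μ = ∫ ω, (if r < L ω then L ω else 0) ∂μ := by
    refine integral_congr_ae (Filter.Eventually.of_forall fun ω => ?_)
    simp only [hf]; split <;> simp
  linarith [hle, this.ge, this.le]
end

section
/- Let L be a nonnegative random variable, q₀ ∈ [0,q] with q ∈ (0,1], and suppose r ≥ 0 satisfies P(L > r) = (q − q₀)/(1 − q₀) (with q₀ < 1). Define s*(ℓ) = q₀ + (1 − q₀)·1_{ℓ > r}. Then E[s*(L)] = q, and for every measurable s : ℝ → [q₀, 1] with E[s(L)] = q, one has E[s(L)·L] ≤ E[s*(L)·L]. -/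
open MeasureTheory

/-- Relaxed leverage score sampling optimality: among all selection rules
`s : ℝ → [q₀,1]` with selection rate `E[s(L)] = q`, the rule
`s*(ℓ) = q₀ + (1−q₀)·1_{ℓ > r}` (with `P(L > r) = (q−q₀)/(1−q₀)`) attains rate `q`
and maximizes `E[s(L)·L]`. -/
theorem relaxed_thresholding_maximizes {Ω : Type*} [MeasurableSpace Ω] (μ : Measure Ω)
    [IsProbabilityMeasure μ] (L : Ω → ℝ) (hLmeas : Measurable L)
    (hLnonneg : ∀ ω, 0 ≤ L ω) (hLint : Integrable L μ)
    (q q₀ : ℝ) (hq : q ∈ Set.Ioc (0 : ℝ) 1) (hq₀ : q₀ ∈ Set.Ico (0 : ℝ) q) (hq₀1 : q₀ < 1)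
    (r : ℝ) (hr : 0 ≤ r)
    (hrq : μ {ω | r < L ω} = ENNReal.ofReal ((q - q₀) / (1 - q₀))) :
    (∫ ω, (q₀ + (1 - q₀) * (if r < L ω then (1 : ℝ) else 0)) ∂μ = q) ∧
      ∀ s : ℝ → ℝ, Measurable s → (∀ x, s x ∈ Set.Icc q₀ 1) →
        (∫ ω, s (L ω) ∂μ = q) →
        ∫ ω, s (L ω) * L ω ∂μ ≤
          ∫ ω, (q₀ + (1 - q₀) * (if r < L ω then (1 : ℝ) else 0)) * L ω ∂μ := by
  obtain ⟨hq0pos, hq1⟩ := hq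
  obtain ⟨hq₀0, hq₀q⟩ := hq₀
  have hA : MeasurableSet {ω | r < L ω} := measurableSet_lt measurable_const hLmeas
  set f : Ω → ℝ := fun ω => q₀ + (1 - q₀) * (if r < L ω then (1 : ℝ) else 0) with hf
  have hfmeas : Measurable f := by
    apply Measurable.add measurable_const
    exact Measurable.const_mul (Measurable.ite hA measurable_const measurable_const) _
  have hfbound : ∀ ω, |f ω| ≤ 1 := by
    intro ω
    simp only [hf]
    split_ifs with h
    · rw [abs_of_nonneg (by linarith)]; linarith
    · rw [abs_of_nonneg (by linarith)]; linarith
  have hind : (fun ω => if r < L ω then (1:ℝ) else 0)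
      = Set.indicator {ω | r < L ω} (fun _ => (1:ℝ)) := by
    ext ω; by_cases h : r < L ω <;> simp [Set.indicator_apply, Set.mem_setOf_eq, h]
  have hfint : Integrable f μ := by
    apply Integrable.add (integrable_const _)
    apply Integrable.const_mul
    rw [hind]
    exact (integrable_const (1:ℝ)).indicator hA
  have hμAr : (μ {ω | r < L ω}).toReal = (q - q₀) / (1 - q₀) := by
    rw [hrq, ENNReal.toReal_ofReal]
    apply div_nonneg <;> linarith
  have hfint_eq : ∫ ω, f ω ∂μ = q := by
    rw [hf]
    rw [integral_add (integrable_const _)]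
    · rw [integral_const, probReal_univ, smul_eq_mul, one_mul,
        integral_const_mul, hind, integral_indicator_const _ hA, smul_eq_mul, mul_one, measureReal_def, hμAr]
      have h10 : (1:ℝ) - q₀ ≠ 0 := by linarith
      field_simp
      ring
    · apply Integrable.const_mul
      rw [hind]
      exact (integrable_const (1:ℝ)).indicator hA
  refine ⟨hfint_eq, ?_⟩
  intro s hsmeas hsmem hsint_eq
  have hsLint : Integrable (fun ω => s (L ω)) μ := by
    apply Integrable.mono' (integrable_const (1:ℝ)) (hsmeas.comp hLmeas).aestronglyMeasurable
    filter_upwards with ω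
    have := hsmem (L ω)
    rw [Real.norm_eq_abs, abs_le]
    refine ⟨?_, ?_⟩ <;> simp only [Function.comp_apply]
    · linarith [this.1]
    · exact this.2
  have hsLLint : Integrable (fun ω => s (L ω) * L ω) μ := by
    apply Integrable.bdd_mul (c := 1) hLint (hsmeas.comp hLmeas).aestronglyMeasurable
    refine Filter.Eventually.of_forall (fun ω => ?_)
    have := hsmem (L ω)
    rw [Real.norm_eq_abs, abs_le]
    refine ⟨?_, ?_⟩ <;> simp only [Function.comp_apply]
    · linarith [this.1]
    · exact this.2
  have hfLint : Integrable (fun ω => f ω * L ω) μ := by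
    apply Integrable.bdd_mul (c := 1) hLint hfmeas.aestronglyMeasurable
    exact Filter.Eventually.of_forall (fun ω => hfbound ω)
  -- key pointwise inequality
  have hkey : ∀ ω, 0 ≤ (f ω - s (L ω)) * (L ω - r) := by
    intro ω
    have hs := hsmem (L ω)
    by_cases h : r < L ω
    · have hfv : f ω = 1 := by simp only [hf, if_pos h]; ring
      rw [hfv]; nlinarith [hs.2]
    · have hfv : f ω = q₀ := by simp only [hf, if_neg h]; ring
      rw [hfv]; push_neg at h; nlinarith [hs.1]
  have hgint : Integrable (fun ω => (f ω - s (L ω)) * (L ω - r)) μ := by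
    have heq : (fun ω => (f ω - s (L ω)) * (L ω - r))
        = fun ω => (f ω * L ω - s (L ω) * L ω) - r * (f ω - s (L ω)) := by
      ext ω; ring
    rw [heq]
    exact (hfLint.sub hsLLint).sub ((hfint.sub hsLint).const_mul r)
  have hnonneg : 0 ≤ ∫ ω, (f ω - s (L ω)) * (L ω - r) ∂μ :=
    integral_nonneg hkey
  have hexpand : ∫ ω, (f ω - s (L ω)) * (L ω - r) ∂μ
      = (∫ ω, f ω * L ω ∂μ - ∫ ω, s (L ω) * L ω ∂μ)
        - r * (∫ ω, f ω ∂μ - ∫ ω, s (L ω) ∂μ) := by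
    have h1 : ∫ ω, (f ω - s (L ω)) * (L ω - r) ∂μ
        = ∫ ω, ((f ω * L ω - s (L ω) * L ω) - r * (f ω - s (L ω))) ∂μ := by
      congr 1; ext ω; ring
    have i1 : Integrable (fun ω => f ω * L ω - s (L ω) * L ω) μ := hfLint.sub hsLLint
    have i2 : Integrable (fun ω => r * (f ω - s (L ω))) μ := (hfint.sub hsLint).const_mul r
    rw [h1, integral_sub i1 i2, integral_sub hfLint hsLLint, integral_const_mul,
      integral_sub hfint hsLint]
  rw [hexpand, hfint_eq, hsint_eq] at hnonneg
  simp only [sub_self, mul_zero, sub_zero] at hnonneg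
  linarith
end

section
/- Let ξ be a nonnegative random variable with E[ξ²] < ∞, let S be uniform on the unit sphere of ℝ^p independent of ξ, let Σ be symmetric positive definite, and let X = ξ Σ^{1/2} S. Let f : [0,∞) → [0,1] be measurable and define s(x) = f(xᵀ Σ⁻¹ x). Then E[s(X) X Xᵀ] = c · Σ, where c = (1/p) · E[f(ξ²) ξ²]. -/
open MeasureTheory ProbabilityTheory Matrix


noncomputable def signedPermIso {p : ℕ} (σ : Equiv.Perm (Fin p)) (ε : Fin p → ℝ)
    (hε : ∀ i, ε i * ε i = 1) :
    EuclideanSpace ℝ (Fin p) ≃ₗᵢ[ℝ] EuclideanSpace ℝ (Fin p) where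
  toFun v := WithLp.toLp 2 (fun i => ε i * v (σ i))
  invFun w := WithLp.toLp 2 (fun j => ε (σ.symm j) * w (σ.symm j))
  map_add' v w := by ext i; simp [PiLp.add_apply]; ring
  map_smul' c v := by ext i; simp [PiLp.smul_apply]; ring
  left_inv v := by ext j; simp [hε]; rw [← mul_assoc, hε, one_mul]
  right_inv w := by ext i; simp [hε]; rw [← mul_assoc, hε, one_mul]
  norm_map' v := by
    simp only [EuclideanSpace.norm_eq, Real.norm_eq_abs, sq_abs]
    congr 1
    rw [← Equiv.sum_comp σ (fun i => v i ^ 2)]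
    refine Finset.sum_congr rfl fun i _ => ?_
    show (ε i * v (σ i)) ^ 2 = _
    rw [mul_pow]
    have : ε i ^ 2 = 1 := by rw [sq, hε]
    rw [this, one_mul]

lemma signedPermIso_apply {p : ℕ} (σ : Equiv.Perm (Fin p)) (ε : Fin p → ℝ)
    (hε : ∀ i, ε i * ε i = 1) (v : EuclideanSpace ℝ (Fin p)) (i : Fin p) :
    signedPermIso σ ε hε v i = ε i * v (σ i) := rfl


/-- For a sampling function depending only on the Mahalanobis (leverage) score of a
centered elliptical covariate `X = ξ Σ^{1/2} S`, the design matrix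
`Γ(s) = E[s(X) X Xᵀ]` is proportional to `Σ`:
`E[s(X) X Xᵀ] = c Σ` with `c = (1/p) E[f(ξ²) ξ²]`, where `s(x) = f(xᵀ Σ⁻¹ x)`. -/
theorem elliptical_design_matrix {p : ℕ} (hp : 0 < p)
    {Ω : Type*} [MeasurableSpace Ω] (μ : Measure Ω) [IsProbabilityMeasure μ]
    (ξ : Ω → ℝ) (hξmeas : Measurable ξ) (hξ0 : ∀ ω, 0 ≤ ξ ω)
    (hξint : Integrable (fun ω => ξ ω ^ 2) μ)
    (S : Ω → EuclideanSpace ℝ (Fin p)) (hSmeas : Measurable S)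
    (hSsphere : ∀ ω, ‖S ω‖ = 1)
    (hSunif : ∀ g : EuclideanSpace ℝ (Fin p) ≃ₗᵢ[ℝ] EuclideanSpace ℝ (Fin p),
      (μ.map S).map g = μ.map S)
    (hindep : IndepFun ξ S μ)
    (Sig R : Matrix (Fin p) (Fin p) ℝ) (hSig : Sig.PosDef)
    (hRsym : R.IsSymm) (hRR : R * R = Sig)
    (X : Ω → Fin p → ℝ) (hX : X = fun ω => ξ ω • R.mulVec (fun i => S ω i))
    (f : ℝ → ℝ) (hf : Measurable f) (hf01 : ∀ x, f x ∈ Set.Icc (0 : ℝ) 1)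
    (s : (Fin p → ℝ) → ℝ) (hs : s = fun x => f (x ⬝ᵥ Sig⁻¹.mulVec x)) :
    (Matrix.of fun i j => ∫ ω, s (X ω) * (X ω i * X ω j) ∂μ) =
      ((p : ℝ)⁻¹ * ∫ ω, f (ξ ω ^ 2) * ξ ω ^ 2 ∂μ) • Sig := by
  classical
  -- coordinate measurability
  have hSk : ∀ k : Fin p, Measurable fun ω => S ω k :=
    fun k => (measurable_pi_apply k).comp ((WithLp.measurable_ofLp 2 _).comp hSmeas)
  -- sum of squares is 1
  have hsum1 : ∀ ω, ∑ i, S ω i ^ 2 = 1 := by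
    intro ω
    have h := hSsphere ω
    rw [EuclideanSpace.norm_eq] at h
    have h2 := congrArg (· ^ 2) h
    simp only [Real.norm_eq_abs, sq_abs] at h2
    rwa [Real.sq_sqrt (Finset.sum_nonneg fun i _ => sq_nonneg _), one_pow] at h2
  have habs : ∀ ω k, |S ω k| ≤ 1 := by
    intro ω k
    have : S ω k ^ 2 ≤ 1 := by
      rw [← hsum1 ω]
      exact Finset.single_le_sum (fun i (_ : i ∈ Finset.univ) => sq_nonneg (S ω i)) (Finset.mem_univ k)
    exact (sq_le_one_iff_abs_le_one _).mp this
  -- integrability of coordinate products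
  have hIntS : ∀ k l : Fin p, Integrable (fun ω => S ω k * S ω l) μ := by
    intro k l
    refine Integrable.mono' (integrable_const 1) ((hSk k).mul (hSk l)).aestronglyMeasurable
      (Filter.Eventually.of_forall fun ω => ?_)
    rw [Real.norm_eq_abs, abs_mul]
    exact mul_le_one₀ (habs ω k) (abs_nonneg _) (habs ω l)
  -- change of variables via the sphere symmetry
  have key : ∀ (g : EuclideanSpace ℝ (Fin p) ≃ₗᵢ[ℝ] EuclideanSpace ℝ (Fin p))
      (φ : EuclideanSpace ℝ (Fin p) → ℝ), Measurable φ →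
      ∫ ω, φ (g (S ω)) ∂μ = ∫ ω, φ (S ω) ∂μ := by
    intro g φ hφ
    have hg : Measurable (g : EuclideanSpace ℝ (Fin p) → EuclideanSpace ℝ (Fin p)) :=
      g.continuous.measurable
    calc ∫ ω, φ (g (S ω)) ∂μ
        = ∫ v, φ (g v) ∂(μ.map S) :=
          (integral_map hSmeas.aemeasurable ((hφ.comp hg)).aestronglyMeasurable).symm
      _ = ∫ w, φ w ∂((μ.map S).map g) :=
          (integral_map hg.aemeasurable hφ.aestronglyMeasurable).symm
      _ = ∫ w, φ w ∂(μ.map S) := by rw [hSunif g]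
      _ = ∫ ω, φ (S ω) ∂μ := integral_map hSmeas.aemeasurable hφ.aestronglyMeasurable
  have hφmeas : ∀ k l : Fin p, Measurable fun v : EuclideanSpace ℝ (Fin p) => v k * v l :=
    fun k l => ((measurable_pi_apply k).comp (WithLp.measurable_ofLp 2 _)).mul
      ((measurable_pi_apply l).comp (WithLp.measurable_ofLp 2 _))
  -- off-diagonal moments vanish
  have hoff : ∀ k l : Fin p, k ≠ l → ∫ ω, S ω k * S ω l ∂μ = 0 := by
    intro k l hkl
    set ε : Fin p → ℝ := fun i => if i = k then -1 else 1 with hε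
    have hε1 : ∀ i, ε i * ε i = 1 := by
      intro i; by_cases h : i = k <;> simp [hε, h]
    have h1 := key (signedPermIso 1 ε hε1) (fun v => v k * v l) (hφmeas k l)
    have h2 : (fun ω => (signedPermIso 1 ε hε1 (S ω)) k * (signedPermIso 1 ε hε1 (S ω)) l)
        = fun ω => -(S ω k * S ω l) := by
      funext ω
      rw [signedPermIso_apply, signedPermIso_apply]
      simp [hε, hkl.symm]
    rw [h2, integral_neg] at h1
    linarith
  -- diagonal moments are equal
  have z : Fin p := ⟨0, hp⟩
  have hdiagEq : ∀ k : Fin p, ∫ ω, S ω k * S ω k ∂μ = ∫ ω, S ω z * S ω z ∂μ := by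
    intro k
    have hε1 : ∀ i : Fin p, (1 : ℝ) * 1 = 1 := fun _ => one_mul 1
    have h1 := key (signedPermIso (Equiv.swap z k) (fun _ => 1) (fun _ => one_mul 1))
      (fun v => v z * v z) (hφmeas z z)
    have h2 : (fun ω => (signedPermIso (Equiv.swap z k) (fun _ => 1) (fun _ => one_mul 1) (S ω)) z
        * (signedPermIso (Equiv.swap z k) (fun _ => 1) (fun _ => one_mul 1) (S ω)) z)
        = fun ω => S ω k * S ω k := by
      funext ω
      rw [signedPermIso_apply]
      rw [one_mul, Equiv.swap_apply_left]
    rw [h2] at h1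
    exact h1
  have hdiag : ∀ k : Fin p, ∫ ω, S ω k * S ω k ∂μ = (p : ℝ)⁻¹ := by
    have hsum : ∑ k : Fin p, ∫ ω, S ω k * S ω k ∂μ = 1 := by
      rw [← integral_finset_sum _ (fun k _ => hIntS k k)]
      have : ∀ ω, ∑ k : Fin p, S ω k * S ω k = 1 := by
        intro ω
        simp_rw [← sq]
        exact hsum1 ω
      simp_rw [this]
      simp
    intro k
    have hsum2 : ∑ k : Fin p, ∫ ω, S ω k * S ω k ∂μ = (p : ℝ) * ∫ ω, S ω z * S ω z ∂μ := by
      rw [Finset.sum_congr rfl fun k _ => hdiagEq k]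
      simp [Finset.sum_const, nsmul_eq_mul]
    have hpne : (p : ℝ) ≠ 0 := Nat.cast_ne_zero.mpr hp.ne'
    have : ∫ ω, S ω z * S ω z ∂μ = (p : ℝ)⁻¹ := by
      field_simp
      simp only [sq]
      linarith [hsum2.symm.trans hsum]
    rw [hdiagEq k, this]
  -- the scalar variable A
  set A : Ω → ℝ := fun ω => f (ξ ω ^ 2) * ξ ω ^ 2 with hA
  have hAmeas : Measurable A := (hf.comp (hξmeas.pow_const 2)).mul (hξmeas.pow_const 2)
  have hAabs : ∀ ω, |A ω| ≤ ξ ω ^ 2 := by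
    intro ω
    have h1 := (hf01 (ξ ω ^ 2)).1
    have h2 := (hf01 (ξ ω ^ 2)).2
    rw [hA, abs_of_nonneg (mul_nonneg h1 (sq_nonneg _))]
    calc f (ξ ω ^ 2) * ξ ω ^ 2 ≤ 1 * ξ ω ^ 2 := by
          exact mul_le_mul_of_nonneg_right h2 (sq_nonneg _)
      _ = ξ ω ^ 2 := one_mul _
  have hAint : Integrable A μ :=
    Integrable.mono' hξint hAmeas.aestronglyMeasurable
      (Filter.Eventually.of_forall fun ω => by rw [Real.norm_eq_abs]; exact hAabs ω)
  -- independence factorization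
  have hfact : ∀ k l : Fin p, ∫ ω, A ω * (S ω k * S ω l) ∂μ
      = (∫ ω, A ω ∂μ) * ∫ ω, S ω k * S ω l ∂μ := by
    intro k l
    have hind2 : IndepFun A (fun ω => S ω k * S ω l) μ := by
      have := hindep.comp (φ := fun x : ℝ => f (x ^ 2) * x ^ 2)
        (ψ := fun v : EuclideanSpace ℝ (Fin p) => v k * v l)
        ((hf.comp (measurable_id.pow_const 2)).mul (measurable_id.pow_const 2)) (hφmeas k l)
      exact this
    exact hind2.integral_fun_mul_eq_mul_integral hAint.aestronglyMeasurable (hIntS k l).aestronglyMeasurable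
  set c : ℝ := ∫ ω, A ω ∂μ with hc
  -- the second-moment matrix of S
  have hJ : ∀ k l : Fin p, ∫ ω, S ω k * S ω l ∂μ = if k = l then (p : ℝ)⁻¹ else 0 := by
    intro k l
    by_cases h : k = l
    · subst h; rw [if_pos rfl]; exact hdiag k
    · rw [if_neg h]; exact hoff k l h
  -- integrability of A * S_k S_l
  have hASint : ∀ k l : Fin p, Integrable (fun ω => A ω * (S ω k * S ω l)) μ := by
    intro k l
    refine Integrable.mono' hξint (hAmeas.mul ((hSk k).mul (hSk l))).aestronglyMeasurable
      (Filter.Eventually.of_forall fun ω => ?_)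
    rw [Real.norm_eq_abs, abs_mul]
    have h2 : |S ω k * S ω l| ≤ 1 := by
      rw [abs_mul]; exact mul_le_one₀ (habs ω k) (abs_nonneg _) (habs ω l)
    calc |A ω| * |S ω k * S ω l| ≤ ξ ω ^ 2 * 1 :=
          mul_le_mul (hAabs ω) h2 (abs_nonneg _) (sq_nonneg _)
      _ = ξ ω ^ 2 := mul_one _
  -- matrix algebra: R * Sig⁻¹ * R = 1
  have hdetSig : Sig.det ≠ 0 := hSig.det_pos.ne'
  have hdetR : IsUnit R.det := by
    refine isUnit_iff_ne_zero.mpr fun h => hdetSig ?_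
    rw [← hRR, Matrix.det_mul, h, mul_zero]
  have hR1 : R * Sig⁻¹ * R = 1 := by
    rw [← hRR, Matrix.mul_inv_rev, ← Matrix.mul_assoc, Matrix.mul_nonsing_inv _ hdetR,
      Matrix.one_mul, Matrix.nonsing_inv_mul _ hdetR]
  -- quadratic form identity
  have hquad : ∀ ω, (X ω) ⬝ᵥ Sig⁻¹.mulVec (X ω) = ξ ω ^ 2 := by
    intro ω
    set w : Fin p → ℝ := fun i => S ω i with hw
    have hww : w ⬝ᵥ w = 1 := by
      rw [dotProduct]
      simp_rw [← sq]
      exact hsum1 ω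
    have hRw : (R.mulVec w) ⬝ᵥ Sig⁻¹.mulVec (R.mulVec w) = 1 := by
      rw [Matrix.mulVec_mulVec]
      have h1 : R.mulVec w = Matrix.vecMul w R := by
        rw [← hRsym.eq, Matrix.mulVec_transpose, hRsym.eq]
      rw [h1, Matrix.dotProduct_mulVec, Matrix.vecMul_vecMul, ← Matrix.mul_assoc, hR1,
        Matrix.vecMul_one, hww]
    rw [hX]
    simp only [Matrix.mulVec_smul, smul_dotProduct, dotProduct_smul,
      smul_eq_mul]
    rw [hRw]
    ring
  -- pointwise integrand identity
  have hpt : ∀ (i j : Fin p) ω, s (X ω) * (X ω i * X ω j)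
      = ∑ k, ∑ l, R i k * R j l * (A ω * (S ω k * S ω l)) := by
    intro i j ω
    have hsX : s (X ω) = f (ξ ω ^ 2) := by rw [hs]; exact congrArg f (hquad ω)
    have hXi : ∀ i, X ω i = ξ ω * ∑ k, R i k * S ω k := by
      intro i
      rw [hX]
      simp only [Pi.smul_apply, smul_eq_mul]
      rw [Matrix.mulVec, dotProduct]
    symm
    calc ∑ k, ∑ l, R i k * R j l * (A ω * (S ω k * S ω l))
        = A ω * ∑ k, ∑ l, (R i k * S ω k) * (R j l * S ω l) := by
          rw [Finset.mul_sum]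
          refine Finset.sum_congr rfl fun k _ => ?_
          rw [Finset.mul_sum]
          exact Finset.sum_congr rfl fun l _ => by ring
      _ = A ω * ((∑ k, R i k * S ω k) * (∑ l, R j l * S ω l)) := by
          rw [Finset.sum_mul_sum]
      _ = f (ξ ω ^ 2) * ((ξ ω * ∑ k, R i k * S ω k) * (ξ ω * ∑ l, R j l * S ω l)) := by
          rw [hA]; ring
      _ = s (X ω) * (X ω i * X ω j) := by rw [hsX, hXi i, hXi j]
  -- final computation
  ext i j
  rw [Matrix.of_apply]
  calc ∫ ω, s (X ω) * (X ω i * X ω j) ∂μ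
      = ∫ ω, ∑ k, ∑ l, R i k * R j l * (A ω * (S ω k * S ω l)) ∂μ := by
        exact integral_congr_ae (Filter.Eventually.of_forall fun ω => hpt i j ω)
    _ = ∑ k, ∑ l, R i k * R j l * ∫ ω, A ω * (S ω k * S ω l) ∂μ := by
        rw [integral_finset_sum _ fun k _ => integrable_finset_sum _ fun l _ =>
          ((hASint k l).const_mul _)]
        refine Finset.sum_congr rfl fun k _ => ?_
        rw [integral_finset_sum _ fun l _ => ((hASint k l).const_mul _)]
        exact Finset.sum_congr rfl fun l _ => integral_const_mul _ _
    _ = ∑ k, ∑ l, R i k * R j l * (c * if k = l then (p : ℝ)⁻¹ else 0) := by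
        refine Finset.sum_congr rfl fun k _ => Finset.sum_congr rfl fun l _ => ?_
        rw [hfact k l, hJ k l, hc]
    _ = ∑ k, R i k * R j k * (c * (p : ℝ)⁻¹) := by
        refine Finset.sum_congr rfl fun k _ => ?_
        rw [Finset.sum_eq_single k]
        · rw [if_pos rfl]
        · intro l _ hlk; rw [if_neg (Ne.symm hlk), mul_zero, mul_zero]
        · intro h; exact absurd (Finset.mem_univ k) h
    _ = (c * (p : ℝ)⁻¹) * ∑ k, R i k * R j k := by
        rw [Finset.mul_sum]
        exact Finset.sum_congr rfl fun k _ => by ring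
    _ = ((p : ℝ)⁻¹ * ∫ ω, f (ξ ω ^ 2) * ξ ω ^ 2 ∂μ) * Sig i j := by
        have hSij : Sig i j = ∑ k, R i k * R j k := by
          rw [← hRR, Matrix.mul_apply]
          exact Finset.sum_congr rfl fun k _ => by rw [hRsym.apply j k]
        rw [hSij]
        simp only [hc, hA]
        ring
    _ = (((p : ℝ)⁻¹ * ∫ ω, f (ξ ω ^ 2) * ξ ω ^ 2 ∂μ) • Sig) i j := by
        rw [Matrix.smul_apply, smul_eq_mul]
end

section
/- Let X = ξ Σ^{1/2} S be a centered elliptical random vector in ℝ^p (ξ ≥ 0 with E ξ² ∈ (0,∞) and absolutely continuous law, S uniform on the unit sphere independent of ξ, Σ symmetric positive definite), let q ∈ (0,1), and let r satisfy P(Xᵀ Σ⁻¹ X > r) = q. Define Γ_LSS = E[1_{XᵀΣ⁻¹X > r} X Xᵀ] and Γ_Ber = q · E[X Xᵀ]. Then Γ_LSS − Γ_Ber is positive semidefinite and det(Γ_LSS) ≥ det(Γ_Ber). -/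
open MeasureTheory ProbabilityTheory Matrix

lemma aux_psd_smul {n : Type*} [Fintype n] {M : Matrix n n ℝ} (h : M.PosSemidef)
    {c : ℝ} (hc : 0 ≤ c) : (c • M).PosSemidef := by
  refine PosSemidef.of_dotProduct_mulVec_nonneg ?_ fun x => ?_
  · unfold Matrix.IsHermitian at *
    rw [conjTranspose_smul, h.1]
    simp
  · have := h.dotProduct_mulVec_nonneg x
    rw [Matrix.smul_mulVec, dotProduct_smul]
    exact mul_nonneg hc this

lemma aux_psd_det_nonneg {n : Type*} [Fintype n] [DecidableEq n] {M : Matrix n n ℝ}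
    (h : M.PosSemidef) : 0 ≤ M.det := by
  rw [h.1.det_eq_prod_eigenvalues]
  exact Finset.prod_nonneg fun i _ => by exact_mod_cast h.eigenvalues_nonneg i

/-- Comparison of the leverage score sampler and the Bernoulli sampler at the same
sampling rate `q` for a centered elliptical covariate `X = ξ Σ^{1/2} S`:
`Γ_LSS − Γ_Ber` is positive semidefinite and `det Γ_LSS ≥ det Γ_Ber`, where
`Γ_LSS = E[1_{XᵀΣ⁻¹X > r} X Xᵀ]` and `Γ_Ber = q E[X Xᵀ]`. -/
theorem lss_dominates_bernoulli {p : ℕ} (hp : 0 < p)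
    {Ω : Type*} [MeasurableSpace Ω] (μ : Measure Ω) [IsProbabilityMeasure μ]
    (ξ : Ω → ℝ) (hξmeas : Measurable ξ) (hξ0 : ∀ ω, 0 ≤ ξ ω)
    (hξint : Integrable (fun ω => ξ ω ^ 2) μ)
    (hξpos : 0 < ∫ ω, ξ ω ^ 2 ∂μ)
    (hξac : (μ.map ξ) ≪ (volume : Measure ℝ))
    (S : Ω → EuclideanSpace ℝ (Fin p)) (hSmeas : Measurable S)
    (hSsphere : ∀ ω, ‖S ω‖ = 1)
    (hSunif : ∀ g : EuclideanSpace ℝ (Fin p) ≃ₗᵢ[ℝ] EuclideanSpace ℝ (Fin p),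
      (μ.map S).map g = μ.map S)
    (hindep : IndepFun ξ S μ)
    (Sig R : Matrix (Fin p) (Fin p) ℝ) (hSig : Sig.PosDef)
    (hRsym : R.IsSymm) (hRR : R * R = Sig)
    (X : Ω → Fin p → ℝ) (hX : X = fun ω => ξ ω • R.mulVec (fun i => S ω i))
    (q : ℝ) (hq : q ∈ Set.Ioo (0 : ℝ) 1) (r : ℝ)
    (hrq : μ {ω | r < X ω ⬝ᵥ Sig⁻¹.mulVec (X ω)} = ENNReal.ofReal q)
    (ΓLSS ΓBer : Matrix (Fin p) (Fin p) ℝ)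
    (hΓLSS : ΓLSS = Matrix.of fun i j =>
      ∫ ω, (if r < X ω ⬝ᵥ Sig⁻¹.mulVec (X ω) then X ω i * X ω j else 0) ∂μ)
    (hΓBer : ΓBer = q • Matrix.of fun i j => ∫ ω, X ω i * X ω j ∂μ) :
    (ΓLSS - ΓBer).PosSemidef ∧ ΓBer.det ≤ ΓLSS.det := by
  -- notation
  set v : Ω → Fin p → ℝ := fun ω => R.mulVec (fun i => S ω i) with hv
  -- R is invertible
  have hRdet : IsUnit R.det := by
    have hdet : R.det * R.det = Sig.det := by rw [← Matrix.det_mul, hRR]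
    have hpos := hSig.det_pos
    refine isUnit_iff_ne_zero.2 fun h0 => ?_
    rw [h0, mul_zero] at hdet
    rw [← hdet] at hpos
    exact lt_irrefl _ hpos
  have h1R : R * R⁻¹ = 1 := Matrix.mul_nonsing_inv R hRdet
  have h2R : R⁻¹ * R = 1 := Matrix.nonsing_inv_mul R hRdet
  have hA : R * (Sig⁻¹ * R) = 1 := by
    rw [← hRR, Matrix.mul_inv_rev, Matrix.mul_assoc R⁻¹ R⁻¹ R, h2R, Matrix.mul_one]
    exact h1R
  -- norm of S coordinates
  have hs1 : ∀ ω, (fun i => S ω i) ⬝ᵥ (fun i => S ω i) = 1 := by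
    intro ω
    have h := hSsphere ω
    rw [EuclideanSpace.norm_eq] at h
    rw [Real.sqrt_eq_one] at h
    simpa [dotProduct, Real.norm_eq_abs, sq_abs, pow_two] using h
  -- quadratic form identity
  have hquad : ∀ ω, X ω ⬝ᵥ Sig⁻¹.mulVec (X ω) = ξ ω ^ 2 := by
    intro ω
    rw [hX]
    simp only
    rw [Matrix.mulVec_smul, smul_dotProduct, dotProduct_smul,
      Matrix.mulVec_mulVec]
    have hR' : R.mulVec (fun i => S ω i) = Matrix.vecMul (fun i => S ω i) R := by
      conv_lhs => rw [← hRsym]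
      rw [Matrix.mulVec_transpose]
    rw [hR', Matrix.dotProduct_mulVec, Matrix.vecMul_vecMul, hA, Matrix.vecMul_one, hs1]
    simp [pow_two, smul_eq_mul]
  -- measurability of the coordinates of v
  have hvmeas : ∀ i, Measurable fun ω => v ω i := by
    intro i
    simp only [hv, Matrix.mulVec, dotProduct]
    exact Finset.measurable_sum _ fun k _ =>
      (measurable_const.mul (((EuclideanSpace.proj k : EuclideanSpace ℝ (Fin p) →L[ℝ] ℝ)
        |>.continuous.measurable).comp hSmeas))
  -- boundedness of v
  have hSbd : ∀ ω k, |S ω k| ≤ 1 := by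
    intro ω k
    have h2 : S ω k * S ω k ≤ 1 := by
      have := hs1 ω
      calc S ω k * S ω k ≤ ∑ j, S ω j * S ω j :=
            Finset.single_le_sum (f := fun j => S ω j * S ω j)
              (fun j _ => mul_self_nonneg _) (Finset.mem_univ k)
        _ = 1 := this
    exact abs_le_one_iff_mul_self_le_one.mpr h2
  have hvbd : ∀ ω i, |v ω i| ≤ ∑ k, |R i k| := by
    intro ω i
    simp only [hv, Matrix.mulVec, dotProduct]
    calc |∑ k, R i k * S ω k| ≤ ∑ k, |R i k * S ω k| := Finset.abs_sum_le_sum_abs _ _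
      _ ≤ ∑ k, |R i k| := by
          refine Finset.sum_le_sum fun k _ => ?_
          rw [abs_mul]
          exact mul_le_of_le_one_right (abs_nonneg _) (hSbd ω k)
  -- integrability of products of coordinates of v
  have hv_int : ∀ i j, Integrable (fun ω => v ω i * v ω j) μ := by
    intro i j
    refine ⟨((hvmeas i).mul (hvmeas j)).aestronglyMeasurable, ?_⟩
    refine HasFiniteIntegral.of_bounded (C := (∑ k, |R i k|) * (∑ k, |R j k|))
      (Filter.Eventually.of_forall fun ω => ?_)
    rw [Real.norm_eq_abs, abs_mul]
    exact mul_le_mul (hvbd ω i) (hvbd ω j) (abs_nonneg _)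
      (Finset.sum_nonneg fun k _ => abs_nonneg _)
  -- condition rewriting
  have hE : MeasurableSet {ω | r < ξ ω ^ 2} :=
    measurableSet_lt measurable_const (hξmeas.pow_const 2)
  have hμE : μ {ω | r < ξ ω ^ 2} = ENNReal.ofReal q := by
    rw [← hrq]
    congr 1
    ext ω
    simp [hquad ω]
  -- indicator integrability and integral
  have hIint : Integrable (fun ω => if r < ξ ω ^ 2 then (1 : ℝ) else 0) μ := by
    refine ⟨(Measurable.ite hE measurable_const measurable_const).aestronglyMeasurable, ?_⟩
    refine HasFiniteIntegral.of_bounded (C := 1) (Filter.Eventually.of_forall fun ω => ?_)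
    by_cases h : r < ξ ω ^ 2 <;> simp [h]
  have hIq : (∫ ω, (if r < ξ ω ^ 2 then (1 : ℝ) else 0) ∂μ) = q := by
    have heq : (fun ω => if r < ξ ω ^ 2 then (1 : ℝ) else 0)
        = Set.indicator {ω | r < ξ ω ^ 2} (fun _ => (1 : ℝ)) := by
      funext ω
      simp [Set.indicator_apply, Set.mem_setOf_eq]
    rw [heq, integral_indicator hE, setIntegral_const, measureReal_def, hμE, smul_eq_mul, mul_one,
      ENNReal.toReal_ofReal hq.1.le]
  have hfint : Integrable (fun ω => if r < ξ ω ^ 2 then ξ ω ^ 2 else 0) μ := by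
    refine hξint.mono
      ((Measurable.ite hE (hξmeas.pow_const 2) measurable_const).aestronglyMeasurable)
      (Filter.Eventually.of_forall fun ω => ?_)
    by_cases h : r < ξ ω ^ 2
    · simp [h]
    · simp only [h, if_false]
      simp only [norm_zero, Real.norm_eq_abs]
      positivity
  -- the key scalar inequality
  set c1 : ℝ := ∫ ω, (if r < ξ ω ^ 2 then ξ ω ^ 2 else 0) ∂μ with hc1
  set m2 : ℝ := ∫ ω, ξ ω ^ 2 ∂μ with hm2
  have hm2nn : 0 ≤ m2 := le_of_lt hξpos
  have hscalar : q * m2 ≤ c1 := by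
    have hpt : ∀ ω, 0 ≤ (ξ ω ^ 2 - r) * ((if r < ξ ω ^ 2 then (1 : ℝ) else 0) - q) := by
      intro ω
      by_cases h : r < ξ ω ^ 2
      · simp only [h, if_true]
        have h1 : 0 ≤ ξ ω ^ 2 - r := by linarith
        have h2 : 0 ≤ 1 - q := by linarith [hq.2]
        exact mul_nonneg h1 h2
      · simp only [h, if_false]
        push_neg at h
        have h1 : ξ ω ^ 2 - r ≤ 0 := by linarith
        nlinarith [mul_nonneg (neg_nonneg.mpr h1) hq.1.le]
    have hexp : ∀ ω, (ξ ω ^ 2 - r) * ((if r < ξ ω ^ 2 then (1 : ℝ) else 0) - q)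
        = ((if r < ξ ω ^ 2 then ξ ω ^ 2 else 0) - q * ξ ω ^ 2)
          - r * ((if r < ξ ω ^ 2 then (1 : ℝ) else 0) - q) := by
      intro ω
      by_cases h : r < ξ ω ^ 2 <;> simp [h] <;> ring
    have h0 : 0 ≤ ∫ ω, (((if r < ξ ω ^ 2 then ξ ω ^ 2 else 0) - q * ξ ω ^ 2)
        - r * ((if r < ξ ω ^ 2 then (1 : ℝ) else 0) - q)) ∂μ := by
      refine integral_nonneg fun ω => ?_
      rw [← hexp ω]
      exact hpt ω
    have e1 : ∫ ω, (((if r < ξ ω ^ 2 then ξ ω ^ 2 else 0) - q * ξ ω ^ 2)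
        - r * ((if r < ξ ω ^ 2 then (1 : ℝ) else 0) - q)) ∂μ
        = (∫ ω, ((if r < ξ ω ^ 2 then ξ ω ^ 2 else 0) - q * ξ ω ^ 2) ∂μ)
          - ∫ ω, r * ((if r < ξ ω ^ 2 then (1 : ℝ) else 0) - q) ∂μ :=
      integral_sub (hfint.sub (hξint.const_mul q))
        ((hIint.sub (integrable_const q)).const_mul r)
    have e2 : (∫ ω, ((if r < ξ ω ^ 2 then ξ ω ^ 2 else 0) - q * ξ ω ^ 2) ∂μ)
        = c1 - q * m2 := by
      rw [integral_sub hfint (hξint.const_mul q), integral_const_mul]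
    have e3 : (∫ ω, r * ((if r < ξ ω ^ 2 then (1 : ℝ) else 0) - q) ∂μ)
        = r * (q - q) := by
      rw [integral_const_mul, integral_sub hIint (integrable_const q), hIq, integral_const]
      simp
    rw [e1, e2, e3] at h0
    linarith
  -- the matrix M = E[(RS)(RS)ᵀ]
  set M : Matrix (Fin p) (Fin p) ℝ := Matrix.of fun i j => ∫ ω, v ω i * v ω j ∂μ with hM
  -- independence factorizations
  have hfmeas : Measurable (fun t : ℝ => if r < t ^ 2 then t ^ 2 else 0) :=
    Measurable.ite (measurableSet_lt measurable_const (measurable_id.pow_const 2))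
      (measurable_id.pow_const 2) measurable_const
  have hf2meas : Measurable (fun t : ℝ => t ^ 2) := measurable_id.pow_const 2
  have hcmeas : ∀ i, Measurable fun y : EuclideanSpace ℝ (Fin p) =>
      (R.mulVec (fun k => y k)) i := by
    intro i
    simp only [Matrix.mulVec, dotProduct]
    exact Finset.measurable_sum _ fun k _ => measurable_const.mul
      ((EuclideanSpace.proj k : EuclideanSpace ℝ (Fin p) →L[ℝ] ℝ)).continuous.measurable
  have hgmeas : ∀ i j, Measurable fun y : EuclideanSpace ℝ (Fin p) =>
      (R.mulVec (fun k => y k)) i * (R.mulVec (fun k => y k)) j :=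
    fun i j => (hcmeas i).mul (hcmeas j)
  have hfac1 : ∀ i j, (∫ ω, (if r < ξ ω ^ 2 then X ω i * X ω j else 0) ∂μ)
      = c1 * M i j := by
    intro i j
    have hind2 := IndepFun.integral_mul_eq_mul_integral (hindep.comp hfmeas (hgmeas i j)) hfint.aestronglyMeasurable (hv_int i j).aestronglyMeasurable
    calc (∫ ω, (if r < ξ ω ^ 2 then X ω i * X ω j else 0) ∂μ)
        = ∫ ω, (((fun t : ℝ => if r < t ^ 2 then t ^ 2 else 0) ∘ ξ)
            * ((fun y : EuclideanSpace ℝ (Fin p) =>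
              (R.mulVec (fun k => y k)) i * (R.mulVec (fun k => y k)) j) ∘ S)) ω ∂μ := by
          congr 1
          funext ω
          simp only [Pi.mul_apply, Function.comp_apply, hX]
          by_cases hb : r < ξ ω ^ 2 <;>
            simp only [hb, if_true, if_false, Pi.smul_apply, smul_eq_mul] <;> ring
      _ = c1 * M i j := hind2
  have hfac2 : ∀ i j, (∫ ω, X ω i * X ω j ∂μ) = m2 * M i j := by
    intro i j
    have hind2 := IndepFun.integral_mul_eq_mul_integral (hindep.comp hf2meas (hgmeas i j)) hξint.aestronglyMeasurable (hv_int i j).aestronglyMeasurable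
    calc (∫ ω, X ω i * X ω j ∂μ)
        = ∫ ω, (((fun t : ℝ => t ^ 2) ∘ ξ)
            * ((fun y : EuclideanSpace ℝ (Fin p) =>
              (R.mulVec (fun k => y k)) i * (R.mulVec (fun k => y k)) j) ∘ S)) ω ∂μ := by
          congr 1
          funext ω
          simp only [Pi.mul_apply, Function.comp_apply, hX, Pi.smul_apply, smul_eq_mul]
          ring
      _ = m2 * M i j := hind2
  have hΓL : ΓLSS = c1 • M := by
    rw [hΓLSS]
    ext i j
    simp only [Matrix.of_apply, Matrix.smul_apply, smul_eq_mul]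
    rw [← hfac1 i j]
    congr 1
    funext ω
    congr 1
    simp [hquad ω]
  have hΓB : ΓBer = (q * m2) • M := by
    rw [hΓBer]
    ext i j
    simp only [Matrix.of_apply, Matrix.smul_apply, smul_eq_mul]
    rw [hfac2 i j]
    ring
  -- M is positive semidefinite
  have hMps : M.PosSemidef := by
    refine PosSemidef.of_dotProduct_mulVec_nonneg ?_ ?_
    · show Mᴴ = M
      ext i j
      rw [Matrix.conjTranspose_apply]
      simp only [hM, Matrix.of_apply, star_trivial]
      congr 1
      funext ω
      ring
    · intro x
      have hswap : x ⬝ᵥ M *ᵥ x = ∫ ω, (∑ i, x i * v ω i) ^ 2 ∂μ := by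
        simp only [dotProduct, Matrix.mulVec, hM, Matrix.of_apply]
        have hterm : ∀ i j, x i * ((∫ ω, v ω i * v ω j ∂μ) * x j)
            = ∫ ω, (x i * x j) * (v ω i * v ω j) ∂μ := by
          intro i j
          rw [integral_const_mul]
          ring
        calc ∑ i, x i * ∑ j, (∫ ω, v ω i * v ω j ∂μ) * x j
            = ∑ i, ∑ j, ∫ ω, (x i * x j) * (v ω i * v ω j) ∂μ := by
              refine Finset.sum_congr rfl fun i _ => ?_
              rw [Finset.mul_sum]
              exact Finset.sum_congr rfl fun j _ => hterm i j
          _ = ∑ i, ∫ ω, ∑ j, (x i * x j) * (v ω i * v ω j) ∂μ := by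
              refine Finset.sum_congr rfl fun i _ => ?_
              exact (integral_finset_sum _ fun j _ => (hv_int i j).const_mul _).symm
          _ = ∫ ω, ∑ i, ∑ j, (x i * x j) * (v ω i * v ω j) ∂μ := by
              refine (integral_finset_sum _ fun i _ => ?_).symm
              exact integrable_finset_sum _ fun j _ => (hv_int i j).const_mul _
          _ = ∫ ω, (∑ i, x i * v ω i) ^ 2 ∂μ := by
              congr 1
              funext ω
              rw [sq, Finset.sum_mul_sum]
              refine Finset.sum_congr rfl fun i _ => Finset.sum_congr rfl fun j _ => ?_
              ring
      have hx : star x = x := by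
        funext i
        simp
      rw [hx, hswap]
      exact integral_nonneg fun ω => sq_nonneg _
  -- conclusion
  have hqm2nn : 0 ≤ q * m2 := mul_nonneg hq.1.le hm2nn
  constructor
  · rw [hΓL, hΓB, ← sub_smul]
    exact aux_psd_smul hMps (by linarith)
  · rw [hΓL, hΓB, Matrix.det_smul, Matrix.det_smul]
    have hd := aux_psd_det_nonneg hMps
    have hpow : (q * m2) ^ Fintype.card (Fin p) ≤ c1 ^ Fintype.card (Fin p) :=
      pow_le_pow_left₀ hqm2nn hscalar _
    exact mul_le_mul_of_nonneg_right hpow hd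
end

section
/- Let L be a nonnegative random variable with absolutely continuous distribution, q ∈ (0,1), and r with P(L > r) = q. Suppose s : [0,∞) → [0,1] is measurable with E[s(L)] = q and E[s(L) L] = E[1_{L > r} L]. Then s(L) = 1_{L > r} almost surely. -/
open MeasureTheory

/-- Almost-everywhere uniqueness of the D-optimal sampling function (scalar form):
if a sampling rule `s` with rate `q` attains the value `E[1_{L>r} L]` of the
hard-thresholding rule, then `s(L) = 1_{L > r}` almost surely. -/
theorem thresholding_unique {Ω : Type*} [MeasurableSpace Ω] (μ : Measure Ω)
    [IsProbabilityMeasure μ] (L : Ω → ℝ) (hLmeas : Measurable L)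
    (hLnonneg : ∀ ω, 0 ≤ L ω) (hLint : Integrable L μ)
    (hLac : (μ.map L) ≪ (volume : Measure ℝ))
    (q : ℝ) (hq : q ∈ Set.Ioo (0 : ℝ) 1) (r : ℝ)
    (hrq : μ {ω | r < L ω} = ENNReal.ofReal q)
    (s : ℝ → ℝ) (hs : Measurable s) (hs01 : ∀ x, s x ∈ Set.Icc (0 : ℝ) 1)
    (hsq : ∫ ω, s (L ω) ∂μ = q)
    (heq : ∫ ω, s (L ω) * L ω ∂μ = ∫ ω, (if r < L ω then L ω else 0) ∂μ) :
    ∀ᵐ ω ∂μ, s (L ω) = (if r < L ω then (1 : ℝ) else 0) := by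
  set ind : Ω → ℝ := fun ω => if r < L ω then (1 : ℝ) else 0 with hind
  set g : Ω → ℝ := fun ω => (ind ω - s (L ω)) * (L ω - r) with hg
  have hindmeas : Measurable ind := by
    apply Measurable.ite (measurableSet_lt measurable_const hLmeas) <;> measurability
  have hsLmeas : Measurable fun ω => s (L ω) := hs.comp hLmeas
  -- integrabilities
  have hsLint : Integrable (fun ω => s (L ω)) μ := by
    refine (integrable_const (1 : ℝ)).mono' hsLmeas.aestronglyMeasurable ?_
    filter_upwards with ω
    rw [Real.norm_eq_abs, abs_le]
    exact ⟨le_trans (by norm_num) (hs01 (L ω)).1, (hs01 (L ω)).2⟩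
  have hindint : Integrable ind μ := by
    refine (integrable_const (1 : ℝ)).mono' hindmeas.aestronglyMeasurable ?_
    filter_upwards with ω
    rw [Real.norm_eq_abs]
    by_cases h : r < L ω <;> simp [ind, h]
  have hsLLint : Integrable (fun ω => s (L ω) * L ω) μ := by
    refine hLint.bdd_mul (c := 1) hsLmeas.aestronglyMeasurable (Filter.Eventually.of_forall fun ω => ?_)
    rw [Real.norm_eq_abs, abs_le]
    exact ⟨le_trans (by norm_num) (hs01 (L ω)).1, (hs01 (L ω)).2⟩
  have hindLint : Integrable (fun ω => ind ω * L ω) μ := by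
    refine hLint.bdd_mul (c := 1) hindmeas.aestronglyMeasurable (Filter.Eventually.of_forall fun ω => ?_)
    rw [Real.norm_eq_abs]
    by_cases h : r < L ω <;> simp [ind, h]
  have hgint : Integrable g μ := by
    have : g = fun ω => (ind ω * L ω - s (L ω) * L ω) - r * (ind ω - s (L ω)) := by
      funext ω; ring
    rw [this]
    exact ((hindLint.sub hsLLint).sub ((hindint.sub hsLint).const_mul r))
  -- nonnegativity of g
  have hgnonneg : ∀ ω, 0 ≤ g ω := by
    intro ω
    by_cases h : r < L ω
    · have : ind ω = 1 := if_pos h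
      rw [hg]; dsimp only
      rw [this]
      exact mul_nonneg (by linarith [(hs01 (L ω)).2]) (by linarith)
    · have : ind ω = 0 := if_neg h
      rw [hg]; dsimp only
      rw [this]
      push_neg at h
      have := (hs01 (L ω)).1
      nlinarith
  -- ∫ ind = q
  have hindq : ∫ ω, ind ω ∂μ = q := by
    have : ind = Set.indicator {ω | r < L ω} (fun _ => (1 : ℝ)) := by
      funext ω; by_cases h : r < L ω <;> simp [ind, h, Set.indicator, Set.mem_setOf_eq]
    rw [this, integral_indicator (measurableSet_lt measurable_const hLmeas)]
    simp [measureReal_def, hrq, ENNReal.toReal_ofReal hq.1.le]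
  -- ∫ ind * L = ∫ s(L) * L
  have hindL : ∫ ω, ind ω * L ω ∂μ = ∫ ω, s (L ω) * L ω ∂μ := by
    rw [heq]
    congr 1
    funext ω
    by_cases h : r < L ω <;> simp [ind, h]
  -- ∫ g = 0
  have hgzero : ∫ ω, g ω ∂μ = 0 := by
    have hcongr : ∫ ω, g ω ∂μ =
        ∫ ω, (ind ω * L ω - s (L ω) * L ω) - r * (ind ω - s (L ω)) ∂μ := by
      congr 1; funext ω; dsimp only [g]; ring
    rw [hcongr,
      integral_sub
        (show Integrable (fun ω => ind ω * L ω - s (L ω) * L ω) μ from hindLint.sub hsLLint)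
        (show Integrable (fun ω => r * (ind ω - s (L ω))) μ from
          (show Integrable (fun ω => ind ω - s (L ω)) μ from hindint.sub hsLint).const_mul r),
      integral_sub hindLint hsLLint, integral_const_mul,
      integral_sub hindint hsLint, hindL, hindq, hsq]
    ring
  -- g = 0 a.e.
  have hgae : ∀ᵐ ω ∂μ, g ω = 0 := by
    have := (integral_eq_zero_iff_of_nonneg hgnonneg hgint).mp hgzero
    filter_upwards [this] with ω h using h
  -- L ≠ r a.e.
  have hLner : ∀ᵐ ω ∂μ, L ω ≠ r := by
    have h1 : μ {ω | L ω = r} = 0 := by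
      have : μ.map L {r} = 0 := hLac (by simp)
      rwa [Measure.map_apply hLmeas (measurableSet_singleton r)] at this
    rw [ae_iff]
    simpa using h1
  filter_upwards [hgae, hLner] with ω hgω hne
  by_cases h : r < L ω
  · have hind1 : ind ω = 1 := if_pos h
    rw [if_pos h]
    have hLr : L ω - r ≠ 0 := by intro hc; exact hne (by linarith)
    have := mul_eq_zero.mp hgω
    rcases this with h' | h'
    · rw [hind1] at h'; linarith
    · exact absurd h' hLr
  · have hind0 : ind ω = 0 := if_neg h
    rw [if_neg h]
    have hLr : L ω - r ≠ 0 := by intro hc; exact hne (by linarith)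
    rcases mul_eq_zero.mp hgω with h' | h'
    · rw [hind0] at h'; linarith
    · exact absurd h' hLr
end
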